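/- Let t be the Thue-Morse sequence and t_m its m-fold running sum mod 2. Then for all k ≥ 0 and n ≥ 0: t_{2^n}[k] ≡ t_1[⌊k/2^n⌋] + (⌊k/2^n⌋ + 1)·t[k mod 2^n] (mod 2). -/

import Mathlib

/-- The Thue–Morse sequence: parity of the number of 1s in the binary representation. -/
def t (k : ℕ) : ℕ := (Nat.digits 2 k).sum % 2

/-- `ts m` is the m-fold iterated running sum (mod 2) of the Thue–Morse sequence. -/
def ts : ℕ → ℕ → ℕ
  | 0, k => t k
  | m + 1, k => (∑ j ∈ Finset.range (k + 1), ts m j) % 2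

open Finset

/-- Thue–Morse sequence valued in `ZMod 2`. -/
def t2 (k : ℕ) : ZMod 2 := (t k : ZMod 2)

/-- Running sum operator on `ZMod 2`-valued sequences. -/
def S (a : ℕ → ZMod 2) (k : ℕ) : ZMod 2 := ∑ j ∈ range (k + 1), a j

lemma ts_cast (m k : ℕ) : ((ts m k : ZMod 2)) = S^[m] t2 k := by
  induction m generalizing k with
  | zero => rfl
  | succ m ih =>
    rw [Function.iterate_succ_apply']
    show (((∑ j ∈ Finset.range (k + 1), ts m j) % 2 : ℕ) : ZMod 2) = _
    rw [ZMod.natCast_mod, Nat.cast_sum]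
    simp only [ih]
    rfl

lemma t2_two_mul (m : ℕ) : t2 (2 * m) = t2 m := by
  rcases Nat.eq_zero_or_pos m with h | h
  · simp [h]
  · unfold t2 t
    rw [Nat.digits_def' (by norm_num : (1:ℕ) < 2) (by omega : 0 < 2 * m)]
    simp [Nat.mul_div_cancel_left _ (by norm_num : (0:ℕ) < 2), Nat.mul_mod_right]

lemma t2_two_mul_add_one (m : ℕ) : t2 (2 * m + 1) = t2 m + 1 := by
  unfold t2 t
  rw [Nat.digits_def' (by norm_num : (1:ℕ) < 2) (by omega : 0 < 2 * m + 1)]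
  have h1 : (2 * m + 1) % 2 = 1 := by omega
  have h2 : (2 * m + 1) / 2 = m := by omega
  rw [h1, h2, List.sum_cons, ZMod.natCast_mod, ZMod.natCast_mod, Nat.cast_add, Nat.cast_one]
  ring

lemma t2_add (n i r : ℕ) (hr : r < 2 ^ n) : t2 (2 ^ n * i + r) = t2 i + t2 r := by
  induction n generalizing r with
  | zero =>
    interval_cases r
    simp [t2, t]
  | succ n ih =>
    have hr' : r / 2 < 2 ^ n := by
      have : r < 2 ^ n * 2 := by rw [← pow_succ]; exact hr
      omega
    have hkey : 2 ^ (n + 1) * i + r = 2 * (2 ^ n * i + r / 2) + r % 2 := by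
      have := Nat.div_add_mod r 2
      ring_nf
      omega
    rcases (by omega : r % 2 = 0 ∨ r % 2 = 1) with h | h
    · have hrr : r = 2 * (r / 2) := by omega
      rw [hkey, h, add_zero, t2_two_mul, ih _ hr']
      conv_rhs => rw [hrr, t2_two_mul]
    · have hrr : r = 2 * (r / 2) + 1 := by omega
      rw [hkey, h, t2_two_mul_add_one, ih _ hr']
      conv_rhs => rw [hrr, t2_two_mul_add_one]
      ring

lemma sumPairs (f : ℕ → ZMod 2) (s : ℕ) :
    ∑ i ∈ range (2 * s), f i = ∑ j ∈ range s, (f (2 * j) + f (2 * j + 1)) := by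
  induction s with
  | zero => simp
  | succ s ih =>
    have h : 2 * (s + 1) = 2 * s + 1 + 1 := by ring
    rw [h, Finset.sum_range_succ, Finset.sum_range_succ, ih, Finset.sum_range_succ]
    ring

lemma key (f : ℕ → ZMod 2) (q : ℕ) :
    ∑ i ∈ range (q + 1), ∑ j ∈ range (i + 1), f j
      = ∑ j ∈ range (q / 2 + 1), f (2 * j + q % 2) := by
  induction q with
  | zero => simp
  | succ q ih =>
    rw [Finset.sum_range_succ, ih]
    rcases Nat.even_or_odd q with ⟨s, hs⟩ | ⟨s, hs⟩
    · have hq : q = 2 * s := by omega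
      subst hq
      have h1 : 2 * s / 2 = s := by omega
      have h2 : (2 * s) % 2 = 0 := by omega
      have h3 : (2 * s + 1) / 2 = s := by omega
      have h4 : (2 * s + 1) % 2 = 1 := by omega
      rw [h1, h2, h3, h4]
      have h5 : 2 * s + 1 + 1 = 2 * (s + 1) := by ring
      rw [h5, sumPairs, Finset.sum_add_distrib]
      simp only [add_zero]
      exact (by decide : ∀ x y : ZMod 2, x + (x + y) = y) _ _
    · have hq : q = 2 * s + 1 := by omega
      subst hq
      have h1 : (2 * s + 1) / 2 = s := by omega
      have h2 : (2 * s + 1) % 2 = 1 := by omega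
      have h3 : (2 * s + 1 + 1) / 2 = s + 1 := by omega
      have h4 : (2 * s + 1 + 1) % 2 = 0 := by omega
      rw [h1, h2, h3, h4]
      rw [Finset.sum_range_succ (fun j => f (2 * j + 0)) (s + 1),
        show 2 * s + 1 + 1 + 1 = 2 * (s + 1) + 1 from by ring,
        Finset.sum_range_succ (f := f) (2 * (s + 1)), sumPairs, Finset.sum_add_distrib]
      simp only [add_zero]
      exact (by decide : ∀ x y z : ZMod 2, y + (x + y + z) = x + z) _ _ _

lemma iter_pow (n : ℕ) : ∀ (a : ℕ → ZMod 2) (k : ℕ),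
    S^[2 ^ n] a k = ∑ i ∈ range (k / 2 ^ n + 1), a (2 ^ n * i + k % 2 ^ n) := by
  induction n with
  | zero =>
    intro a k
    simp [S, Nat.mod_one]
  | succ n ih =>
    intro a k
    have hpos : 0 < 2 ^ n := Nat.pow_pos (by norm_num)
    have hrlt : k % 2 ^ n < 2 ^ n := Nat.mod_lt _ hpos
    have h1 : (2:ℕ) ^ (n + 1) = 2 ^ n + 2 ^ n := by ring
    rw [h1, Function.iterate_add_apply, ih]
    simp only [ih]
    have hterm : ∀ i, (∑ i' ∈ range ((2 ^ n * i + k % 2 ^ n) / 2 ^ n + 1),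
        a (2 ^ n * i' + (2 ^ n * i + k % 2 ^ n) % 2 ^ n))
          = ∑ i' ∈ range (i + 1), a (2 ^ n * i' + k % 2 ^ n) := by
      intro i
      have hd : (2 ^ n * i + k % 2 ^ n) / 2 ^ n = i := by
        rw [Nat.mul_add_div hpos, Nat.div_eq_of_lt hrlt, add_zero]
      have hm : (2 ^ n * i + k % 2 ^ n) % 2 ^ n = k % 2 ^ n := by
        rw [Nat.mul_add_mod, Nat.mod_eq_of_lt hrlt]
      rw [hd, hm]
    rw [Finset.sum_congr rfl fun i _ => hterm i]
    rw [key (fun i' => a (2 ^ n * i' + k % 2 ^ n)) (k / 2 ^ n)]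
    have hdiv : k / 2 ^ n / 2 = k / (2 ^ n + 2 ^ n) := by
      have h2 : (2:ℕ) ^ n * 2 = 2 ^ n + 2 ^ n := by ring
      rw [Nat.div_div_eq_div_mul, h2]
    have hk : k = (2 ^ n * (k / 2 ^ n % 2) + k % 2 ^ n) + (2 ^ n + 2 ^ n) * (k / 2 ^ n / 2) := by
      conv_lhs => rw [← Nat.div_add_mod k (2 ^ n), ← Nat.div_add_mod (k / 2 ^ n) 2]
      ring
    have hmod : k % (2 ^ n + 2 ^ n) = 2 ^ n * (k / 2 ^ n % 2) + k % 2 ^ n := by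
      conv_lhs => rw [hk]
      rw [Nat.add_mul_mod_self_left]
      apply Nat.mod_eq_of_lt
      have h2 : k / 2 ^ n % 2 < 2 := Nat.mod_lt _ (by norm_num)
      nlinarith
    rw [hdiv]
    refine Finset.sum_congr rfl fun j _ => ?_
    congr 1
    rw [hmod]
    ring

theorem tm_pow2sum (n k : ℕ) :
    ts (2 ^ n) k ≡ ts 1 (k / 2 ^ n) + (k / 2 ^ n + 1) * t (k % 2 ^ n) [MOD 2] := by
  rw [← ZMod.natCast_eq_natCast_iff]
  have hpos : 0 < 2 ^ n := Nat.pow_pos (by norm_num)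
  have hrlt : k % 2 ^ n < 2 ^ n := Nat.mod_lt _ hpos
  rw [ts_cast, iter_pow]
  have hterm : ∀ i, t2 (2 ^ n * i + k % 2 ^ n) = t2 i + t2 (k % 2 ^ n) :=
    fun i => t2_add n i _ hrlt
  rw [Finset.sum_congr rfl fun i _ => hterm i, Finset.sum_add_distrib,
    Finset.sum_const, Finset.card_range]
  push_cast
  rw [ts_cast]
  have h1 : S^[1] t2 (k / 2 ^ n) = ∑ i ∈ range (k / 2 ^ n + 1), t2 i := rfl
  rw [h1, nsmul_eq_mul]
  push_cast
  unfold t2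
  ring
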